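/- For the sequence E_n = Σ_{ℓ=0}^{n} C(n,ℓ)/ℓ!, there exist constants 0 < c_1 < c_2 such that c_1 · e^{2√n}/n^{1/4} ≤ E_n ≤ c_2 · e^{2√n}/n^{1/4} for all sufficiently large n. -/

import Mathlib

open Real Finset Filter Nat

lemma aux_sqrt_pi_le (n : ℕ) (hn : n ≠ 0) : 1 ≤ Stirling.stirlingSeq n := by
  obtain ⟨m, rfl⟩ := Nat.exists_eq_succ_of_ne_zero hn
  have h : Real.sqrt π ≤ Stirling.stirlingSeq (m + 1) :=
    Stirling.stirlingSeq'_antitone.le_of_tendsto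
      (Stirling.tendsto_stirlingSeq_sqrt_pi.comp (Filter.tendsto_add_atTop_nat 1)) m
  refine le_trans ?_ h
  rw [show (1:ℝ) = Real.sqrt 1 by simp]
  exact Real.sqrt_le_sqrt (by linarith [Real.pi_gt_three])

lemma aux_fact_ge (ℓ : ℕ) (h : ℓ ≠ 0) :
    Real.sqrt (2*ℓ) * ((ℓ:ℝ)/Real.exp 1)^ℓ ≤ (ℓ ! : ℝ) := by
  have h1 := aux_sqrt_pi_le ℓ h
  have hpos : 0 < Real.sqrt (2*ℓ) * ((ℓ:ℝ)/Real.exp 1)^ℓ := by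
    have : 0 < (ℓ:ℝ) := by exact_mod_cast Nat.pos_of_ne_zero h
    positivity
  have := (le_div_iff₀ hpos).mp h1
  rw [Stirling.stirlingSeq] at h1
  nlinarith [(le_div_iff₀ hpos).mp h1]

lemma aux_fact_le (ℓ : ℕ) (h : ℓ ≠ 0) :
    (ℓ ! : ℝ) ≤ Real.exp 1 * Real.sqrt ℓ * ((ℓ:ℝ)/Real.exp 1)^ℓ := by
  obtain ⟨m, rfl⟩ := Nat.exists_eq_succ_of_ne_zero h
  have h1 : Stirling.stirlingSeq (m+1) ≤ Stirling.stirlingSeq 1 := by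
    have := Stirling.stirlingSeq'_antitone (Nat.zero_le m)
    simpa using this
  rw [Stirling.stirlingSeq_one] at h1
  rw [Stirling.stirlingSeq] at h1
  set ℓ := m + 1
  have hl : 0 < (ℓ:ℝ) := by positivity
  have hd : 0 < Real.sqrt (2*ℓ) * ((ℓ:ℝ)/Real.exp 1)^ℓ := by positivity
  have h2 : (ℓ ! : ℝ) ≤ (Real.exp 1 / Real.sqrt 2) * (Real.sqrt (2*ℓ) * ((ℓ:ℝ)/Real.exp 1)^ℓ) :=
    (div_le_iff₀ hd).mp h1
  have h3 : Real.sqrt (2*(ℓ:ℝ)) = Real.sqrt 2 * Real.sqrt ℓ := Real.sqrt_mul (by norm_num) _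
  rw [h3] at h2
  have hs2 : (0:ℝ) < Real.sqrt 2 := by positivity
  calc (ℓ ! : ℝ) ≤ (Real.exp 1 / Real.sqrt 2) * (Real.sqrt 2 * Real.sqrt ℓ * ((ℓ:ℝ)/Real.exp 1)^ℓ) := h2
    _ = Real.exp 1 * Real.sqrt ℓ * ((ℓ:ℝ)/Real.exp 1)^ℓ := by field_simp

lemma aux_le_exp_sub_one (t : ℝ) : t ≤ Real.exp (t - 1) := by
  have := Real.add_one_le_exp (t - 1); linarith

lemma aux_term_le_exp {x : ℝ} (hx : 0 ≤ x) (ℓ : ℕ) : x ^ ℓ / ℓ ! ≤ Real.exp x :=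
  calc x ^ ℓ / ℓ ! ≤ ∑ i ∈ range (ℓ+1), x ^ i / i ! :=
        Finset.single_le_sum (f := fun i => x ^ i / i !) (fun i _ => by positivity)
          (self_mem_range_succ ℓ)
    _ ≤ Real.exp x := Real.sum_le_exp_of_nonneg hx _

lemma aux_pow_reduce {x : ℝ} (hx : 0 < x) (ℓ : ℕ) (hℓ : ℓ ≠ 0) :
    x ^ ℓ / ℓ ! ≤ (x * Real.exp 1 / ℓ) ^ ℓ / Real.sqrt (2*ℓ) := by
  have hl : 0 < (ℓ:ℝ) := by exact_mod_cast Nat.pos_of_ne_zero hℓ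
  have hd : (0:ℝ) < Real.sqrt (2*ℓ) * ((ℓ:ℝ)/Real.exp 1)^ℓ := by positivity
  have h1 : x ^ ℓ / ℓ ! ≤ x ^ ℓ / (Real.sqrt (2*ℓ) * ((ℓ:ℝ)/Real.exp 1)^ℓ) :=
    div_le_div_of_nonneg_left (by positivity) hd (aux_fact_ge ℓ hℓ)
  refine h1.trans (le_of_eq ?_)
  have hln : (ℓ:ℝ) ≠ 0 := hl.ne'
  have he : Real.exp 1 ≠ 0 := (Real.exp_pos 1).ne'
  have hsn : Real.sqrt (2*(ℓ:ℝ)) ≠ 0 := by positivity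
  rw [div_pow, div_pow, mul_pow]
  field_simp

lemma aux_termUB {x : ℝ} (hx : 144 ≤ x) (ℓ : ℕ) : x ^ ℓ / ℓ ! ≤ Real.exp x / Real.sqrt x := by
  have hx0 : (0:ℝ) < x := by linarith
  have hsx : 0 < Real.sqrt x := Real.sqrt_pos.mpr hx0
  have h12 : 12 ≤ Real.sqrt x := by
    rw [show (12:ℝ) = Real.sqrt 144 by rw [show (144:ℝ) = 12^2 by norm_num, Real.sqrt_sq]; norm_num]
    exact Real.sqrt_le_sqrt hx
  have hsxexp : Real.sqrt x ≤ Real.exp (x/12) := by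
    have h1 : Real.sqrt x ≤ x / 12 := by
      have : Real.sqrt x * Real.sqrt x = x := Real.mul_self_sqrt hx0.le
      nlinarith
    have h2 : x/12 ≤ Real.exp (x/12) := (aux_le_exp_sub_one (x/12)).trans
      (Real.exp_le_exp.mpr (by linarith))
    linarith
  have main : x ^ ℓ / ℓ ! ≤ Real.exp ((11/12) * x) → x ^ ℓ / ℓ ! ≤ Real.exp x / Real.sqrt x := by
    intro h
    refine h.trans ?_
    rw [le_div_iff₀ hsx]
    calc Real.exp (11/12 * x) * Real.sqrt x ≤ Real.exp (11/12 * x) * Real.exp (x/12) :=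
          mul_le_mul_of_nonneg_left hsxexp (Real.exp_nonneg _)
      _ = Real.exp (11/12*x + x/12) := (Real.exp_add _ _).symm
      _ ≤ Real.exp x := Real.exp_le_exp.mpr (by linarith)
  rcases le_or_gt (ℓ:ℝ) (x/2) with hc | hc
  · -- small ℓ
    apply main
    rcases Nat.eq_zero_or_pos ℓ with rfl | hℓpos
    · simpa using Real.one_le_exp (by linarith)
    have hℓ : ℓ ≠ 0 := hℓpos.ne'
    have hl : 0 < (ℓ:ℝ) := by exact_mod_cast hℓpos
    have step1 := aux_pow_reduce hx0 ℓ hℓ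
    have hl1 : (1:ℝ) ≤ (ℓ:ℝ) := by exact_mod_cast hℓpos
    have hs2l : 1 ≤ Real.sqrt (2*(ℓ:ℝ)) := by
      rw [show (1:ℝ) = Real.sqrt 1 by simp]
      exact Real.sqrt_le_sqrt (by linarith)
    set u := Real.sqrt (x/ℓ) with hu
    have hu2 : u * u = x / ℓ := Real.mul_self_sqrt (by positivity)
    have hu0 : 0 ≤ u := Real.sqrt_nonneg _
    have hbase : x * Real.exp 1 / ℓ ≤ Real.exp (2*u - 1) := by
      have h1 : u ≤ Real.exp (u - 1) := aux_le_exp_sub_one u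
      have h2 : x / ℓ ≤ Real.exp (u-1) * Real.exp (u-1) := by nlinarith [Real.exp_nonneg (u-1)]
      have h3 : Real.exp (u-1) * Real.exp (u-1) = Real.exp (2*u - 2) := by
        rw [← Real.exp_add]; ring_nf
      have h4 : x * Real.exp 1 / ℓ = (x/ℓ) * Real.exp 1 := by ring
      rw [h4]
      calc (x/ℓ) * Real.exp 1 ≤ Real.exp (2*u-2) * Real.exp 1 := by
            rw [← h3]; exact mul_le_mul_of_nonneg_right h2 (Real.exp_nonneg 1)
        _ = Real.exp (2*u - 1) := by rw [← Real.exp_add]; ring_nf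
    have hpow : (x * Real.exp 1 / ℓ) ^ ℓ ≤ Real.exp ((ℓ:ℝ) * (2*u - 1)) := by
      rw [show Real.exp ((ℓ:ℝ)*(2*u-1)) = Real.exp (2*u-1) ^ ℓ from Real.exp_nat_mul _ ℓ]
      exact pow_le_pow_left₀ (by positivity) hbase ℓ
    have hexp : (ℓ:ℝ) * (2*u - 1) ≤ 11/12 * x := by
      have ha : Real.sqrt x * Real.sqrt x = x := Real.mul_self_sqrt hx0.le
      have hb : Real.sqrt (ℓ:ℝ) * Real.sqrt (ℓ:ℝ) = (ℓ:ℝ) := Real.mul_self_sqrt hl.le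
      have hab : (ℓ:ℝ) * u = Real.sqrt ℓ * Real.sqrt x := by
        rw [hu, show x / (ℓ:ℝ) = x * (ℓ:ℝ)⁻¹ by ring]
        rw [Real.sqrt_mul hx0.le, Real.sqrt_inv]
        have hsl : 0 < Real.sqrt (ℓ:ℝ) := Real.sqrt_pos.mpr hl
        field_simp
        nlinarith
      nlinarith [sq_nonneg (3*Real.sqrt x - 4*Real.sqrt (ℓ:ℝ)), Real.sqrt_nonneg x,
        Real.sqrt_nonneg (ℓ:ℝ)]
    calc x ^ ℓ / ℓ ! ≤ (x * Real.exp 1 / ℓ) ^ ℓ / Real.sqrt (2*ℓ) := step1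
      _ ≤ (x * Real.exp 1 / ℓ) ^ ℓ / 1 := by
          apply div_le_div_of_nonneg_left (by positivity) one_pos hs2l
      _ = (x * Real.exp 1 / ℓ) ^ ℓ := div_one _
      _ ≤ Real.exp ((ℓ:ℝ) * (2*u - 1)) := hpow
      _ ≤ Real.exp (11/12 * x) := Real.exp_le_exp.mpr hexp
  · -- large ℓ
    have hℓ : ℓ ≠ 0 := by
      intro h; rw [h] at hc; simp at hc; linarith
    have hl : 0 < (ℓ:ℝ) := by exact_mod_cast Nat.pos_of_ne_zero hℓ
    have step1 := aux_pow_reduce hx0 ℓ hℓ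
    have hbase : x * Real.exp 1 / ℓ ≤ Real.exp (x/ℓ) := by
      have h1 : x/ℓ ≤ Real.exp (x/ℓ - 1) := aux_le_exp_sub_one _
      calc x * Real.exp 1 / ℓ = (x/ℓ) * Real.exp 1 := by ring
        _ ≤ Real.exp (x/ℓ - 1) * Real.exp 1 := mul_le_mul_of_nonneg_right h1 (Real.exp_nonneg 1)
        _ = Real.exp (x/ℓ) := by rw [← Real.exp_add]; ring_nf
    have hpow : (x * Real.exp 1 / ℓ) ^ ℓ ≤ Real.exp x := by
      have := pow_le_pow_left₀ (by positivity) hbase ℓ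
      refine this.trans (le_of_eq ?_)
      rw [← Real.exp_nat_mul]
      congr 1
      field_simp
    have hsq : Real.sqrt x ≤ Real.sqrt (2*ℓ) := Real.sqrt_le_sqrt (by linarith)
    calc x ^ ℓ / ℓ ! ≤ (x * Real.exp 1 / ℓ) ^ ℓ / Real.sqrt (2*ℓ) := step1
      _ ≤ Real.exp x / Real.sqrt (2*ℓ) := by gcongr
      _ ≤ Real.exp x / Real.sqrt x := by
          have h0 : 0 < Real.sqrt x := hsx
          gcongr

lemma aux_upper (n : ℕ) (hn : 20736 ≤ n) :
    ∑ ℓ ∈ range (n+1), (n.choose ℓ : ℝ) / ℓ ! ≤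
      Real.exp (2 * Real.sqrt n) / Real.sqrt (Real.sqrt n) := by
  have hn0 : (0:ℝ) ≤ n := Nat.cast_nonneg n
  set x := Real.sqrt n with hxdef
  have hx : 144 ≤ x := by
    rw [hxdef, show (144:ℝ) = Real.sqrt (144^2) by rw [Real.sqrt_sq] <;> norm_num]
    apply Real.sqrt_le_sqrt
    have : ((20736:ℕ):ℝ) ≤ (n:ℝ) := by exact_mod_cast hn
    norm_num at this ⊢
    linarith
  have hx0 : (0:ℝ) < x := by linarith
  have hsx : 0 < Real.sqrt x := Real.sqrt_pos.mpr hx0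
  have hxx : x * x = (n:ℝ) := Real.mul_self_sqrt hn0
  have hterm : ∀ ℓ ∈ range (n+1),
      (n.choose ℓ:ℝ)/ℓ ! ≤ (Real.exp x / Real.sqrt x) * (x ^ ℓ / ℓ !) := by
    intro ℓ _
    have hfp : (0:ℝ) < ℓ ! := by exact_mod_cast Nat.factorial_pos ℓ
    have h1 : (n.choose ℓ:ℝ) ≤ (n:ℝ)^ℓ / ℓ ! := Nat.choose_le_pow_div ℓ n
    have h2 : (n.choose ℓ:ℝ)/ℓ ! ≤ ((n:ℝ)^ℓ/ℓ !)/ℓ ! := by gcongr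
    have h3 : ((n:ℝ)^ℓ/ℓ !)/ℓ ! = (x^ℓ/ℓ !) * (x^ℓ/ℓ !) := by
      rw [← hxx, mul_pow]; ring
    calc (n.choose ℓ:ℝ)/ℓ ! ≤ ((n:ℝ)^ℓ/ℓ !)/ℓ ! := h2
      _ = (x^ℓ/ℓ !) * (x^ℓ/ℓ !) := h3
      _ ≤ (Real.exp x / Real.sqrt x) * (x^ℓ/ℓ !) := by
          have := aux_termUB hx ℓ
          have hnn : (0:ℝ) ≤ x^ℓ/ℓ ! := by positivity
          exact mul_le_mul_of_nonneg_right this hnn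
  calc ∑ ℓ ∈ range (n+1), (n.choose ℓ : ℝ) / ℓ !
      ≤ ∑ ℓ ∈ range (n+1), (Real.exp x / Real.sqrt x) * (x ^ ℓ / ℓ !) :=
        Finset.sum_le_sum hterm
    _ = (Real.exp x / Real.sqrt x) * ∑ ℓ ∈ range (n+1), x ^ ℓ / ℓ ! := by rw [Finset.mul_sum]
    _ ≤ (Real.exp x / Real.sqrt x) * Real.exp x := by
        have h := Real.sum_le_exp_of_nonneg hx0.le (n+1)
        have : (0:ℝ) ≤ Real.exp x / Real.sqrt x := by positivity
        exact mul_le_mul_of_nonneg_left h this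
    _ = Real.exp (2 * x) / Real.sqrt x := by
        rw [div_mul_eq_mul_div, ← Real.exp_add]; ring_nf

lemma aux_pow_reduce_low {y : ℝ} (hy : 0 < y) (ℓ : ℕ) (hℓ : ℓ ≠ 0) :
    (y * Real.exp 1 / ℓ) ^ ℓ / (Real.exp 1 * Real.sqrt ℓ) ≤ y ^ ℓ / ℓ ! := by
  have hl : 0 < (ℓ:ℝ) := by exact_mod_cast Nat.pos_of_ne_zero hℓ
  have hfp : (0:ℝ) < ℓ ! := by exact_mod_cast Nat.factorial_pos ℓ
  have h1 : y ^ ℓ / (Real.exp 1 * Real.sqrt ℓ * ((ℓ:ℝ)/Real.exp 1)^ℓ) ≤ y ^ ℓ / ℓ ! :=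
    div_le_div_of_nonneg_left (by positivity) hfp (aux_fact_le ℓ hℓ)
  refine le_trans (le_of_eq ?_) h1
  have hln : (ℓ:ℝ) ≠ 0 := hl.ne'
  have he : Real.exp 1 ≠ 0 := (Real.exp_pos 1).ne'
  have hsn : Real.sqrt (ℓ:ℝ) ≠ 0 := by positivity
  rw [div_pow, div_pow, mul_pow]
  field_simp

set_option maxHeartbeats 2000000 in
lemma aux_lower (n : ℕ) (hn : 1000000 ≤ n) :
    Real.exp (2 * Real.sqrt n) * (Real.exp (-12) / 8) / Real.sqrt (Real.sqrt n) ≤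
      ∑ ℓ ∈ range (n+1), (n.choose ℓ : ℝ) / ℓ ! := by
  -- natural number setup
  set s := n.sqrt with hsdef
  have hs1000 : 1000 ≤ s := by rw [hsdef, Nat.le_sqrt]; omega
  have hssn : s * s ≤ n := by have := Nat.sqrt_le' n; rwa [pow_two] at this
  have hnss : n < (s+1) * (s+1) := by
    have := Nat.lt_succ_sqrt' n; rw [pow_two] at this; exact this
  have h2s2 : 2*s + 2 ≤ n := by nlinarith only [hssn, hs1000]
  set m := n - (2*s+2) with hmdef
  have hmn : m + (2*s+2) = n := Nat.sub_add_cancel h2s2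
  set b := m.sqrt with hbdef
  have hbbm : b * b ≤ m := by
    have := Nat.sqrt_le' m; rwa [pow_two] at this
  have hmbb : m < (b+1) * (b+1) := by
    have := Nat.lt_succ_sqrt' m; rwa [pow_two] at this
  set k := s.sqrt with hkdef
  have hkks : k * k ≤ s := by have := Nat.sqrt_le' s; rwa [pow_two] at this
  have hskk : s < (k+1) * (k+1) := by
    have := Nat.lt_succ_sqrt' s; rwa [pow_two] at this
  have hbs : b ≤ s := by
    rw [hbdef, hsdef]; exact Nat.sqrt_le_sqrt (by omega)
  have hks : k ≤ s := Nat.sqrt_le_self s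
  -- real setup
  set X := Real.sqrt n with hXdef
  set y := Real.sqrt m with hydef
  have hn0 : (0:ℝ) ≤ n := Nat.cast_nonneg n
  have hm0 : (0:ℝ) ≤ m := Nat.cast_nonneg m
  have hsX : (s:ℝ) ≤ X := by
    rw [hXdef, Real.le_sqrt (by positivity) hn0, pow_two]
    exact_mod_cast hssn
  have hXs : X < (s:ℝ) + 1 := by
    rw [hXdef, Real.sqrt_lt' (by positivity), pow_two]
    exact_mod_cast hnss
  have hby : (b:ℝ) ≤ y := by
    rw [hydef, Real.le_sqrt (by positivity) hm0, pow_two]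
    exact_mod_cast hbbm
  have hyb : y < (b:ℝ) + 1 := by
    rw [hydef, Real.sqrt_lt' (by positivity), pow_two]
    exact_mod_cast hmbb
  have hXX : X * X = (n:ℝ) := Real.mul_self_sqrt hn0
  have hyy : y * y = (m:ℝ) := Real.mul_self_sqrt hm0
  have hmcast : (m:ℝ) = (n:ℝ) - (2*(s:ℝ)+2) := by
    have := congrArg (fun t : ℕ => (t:ℝ)) hmn
    push_cast at this
    linarith
  have hsR : (1000:ℝ) ≤ (s:ℝ) := by exact_mod_cast hs1000
  have hssnR : ((s:ℝ)) * (s:ℝ) ≤ (n:ℝ) := by exact_mod_cast hssn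
  have hX0 : (0:ℝ) < X := by linarith
  have hys2 : (s:ℝ) - 2 ≤ y := by
    rw [hydef, Real.le_sqrt (by linarith) hm0, hmcast]
    nlinarith [hssnR, hsR]
  have hy0 : (0:ℝ) < y := by linarith
  have hyX : y ≤ X := by
    rw [hydef, hXdef]; exact Real.sqrt_le_sqrt (by exact_mod_cast Nat.sub_le n (2*s+2))
  have hXy3 : X ≤ y + 3 := by
    nlinarith only [hXX, hyy, hmcast, hys2, hy0, hX0, hsR]
  -- window
  set a := b + 1 with hadef
  have hak : a + k ≤ 2*s + 2 := by omega
  have hsub : Finset.Ico a (a+k) ⊆ range (n+1) := by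
    intro ℓ hℓ
    rw [Finset.mem_Ico] at hℓ
    rw [Finset.mem_range]
    omega
  -- per-term lower bound
  set C := Real.exp (2*y - 4) / (4 * Real.exp 2 * y) with hCdef
  have hterm : ∀ ℓ ∈ Finset.Ico a (a+k), C ≤ (n.choose ℓ : ℝ)/ℓ ! := by
    intro ℓ hℓ
    rw [Finset.mem_Ico] at hℓ
    obtain ⟨hla, hlk⟩ := hℓ
    have hℓ0 : ℓ ≠ 0 := by omega
    have hlR : ((a:ℝ)) ≤ (ℓ:ℝ) := by exact_mod_cast hla
    have hlRk : (ℓ:ℝ) ≤ (b:ℝ) + (k:ℝ) := by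
      have : ℓ ≤ b + k := by omega
      exact_mod_cast this
    have hkR : ((k:ℝ)) * (k:ℝ) ≤ (s:ℝ) := by exact_mod_cast hkks
    have hk0 : (0:ℝ) ≤ (k:ℝ) := Nat.cast_nonneg k
    have hyl : y ≤ (ℓ:ℝ) := by
      have : (b:ℝ) + 1 ≤ (ℓ:ℝ) := by rw [hadef] at hlR; push_cast at hlR; linarith
      linarith
    have hl0 : (0:ℝ) < (ℓ:ℝ) := by linarith
    have hky : (k:ℝ) ≤ y := by nlinarith only [hkR, hys2, hsR, hk0]
    have hd2 : ((ℓ:ℝ) - y)^2 ≤ 2*y := by nlinarith only [hlRk, hby, hkR, hys2, hsR, hyl, hk0]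
    have hl4 : (ℓ:ℝ) ≤ 4*y := by linarith only [hlRk, hby, hky, hy0]
    -- main chain for y^ℓ/ℓ!
    have hstep : Real.exp (y - 2) / (Real.exp 1 * (2 * Real.sqrt y)) ≤ y^ℓ/ℓ ! := by
      have hred := aux_pow_reduce_low hy0 ℓ hℓ0
      have hbase : Real.exp (2 - (ℓ:ℝ)/y) ≤ y * Real.exp 1 / ℓ := by
        have h1 : (ℓ:ℝ)/y ≤ Real.exp ((ℓ:ℝ)/y - 1) := aux_le_exp_sub_one _
        have h2 : Real.exp (2 - (ℓ:ℝ)/y) * ((ℓ:ℝ)/y) ≤ Real.exp 1 := by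
          calc Real.exp (2 - (ℓ:ℝ)/y) * ((ℓ:ℝ)/y)
              ≤ Real.exp (2 - (ℓ:ℝ)/y) * Real.exp ((ℓ:ℝ)/y - 1) :=
                mul_le_mul_of_nonneg_left h1 (Real.exp_nonneg _)
            _ = Real.exp 1 := by rw [← Real.exp_add]; ring_nf
        have h3 : (0:ℝ) < (ℓ:ℝ)/y := by positivity
        calc Real.exp (2 - (ℓ:ℝ)/y) = (Real.exp (2 - (ℓ:ℝ)/y) * ((ℓ:ℝ)/y)) * (y/ℓ) := by
              field_simp
          _ ≤ Real.exp 1 * (y/ℓ) := mul_le_mul_of_nonneg_right h2 (by positivity)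
          _ = y * Real.exp 1 / ℓ := by ring
      have hpow : Real.exp (2*(ℓ:ℝ) - (ℓ:ℝ)^2/y) ≤ (y * Real.exp 1 / ℓ)^ℓ := by
        have h := pow_le_pow_left₀ (Real.exp_nonneg _) hbase ℓ
        refine le_trans (le_of_eq ?_) h
        rw [← Real.exp_nat_mul]
        congr 1
        field_simp
      have hexp : y - 2 ≤ 2*(ℓ:ℝ) - (ℓ:ℝ)^2/y := by
        have key : (ℓ:ℝ)^2/y ≤ 2*(ℓ:ℝ) - y + 2 := by
          rw [div_le_iff₀ hy0]; nlinarith only [hd2]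
        linarith
      have hsl : Real.sqrt (ℓ:ℝ) ≤ 2 * Real.sqrt y := by
        have h4 : Real.sqrt (ℓ:ℝ) ≤ Real.sqrt (4*y) := Real.sqrt_le_sqrt hl4
        have h5 : Real.sqrt (4*y) = 2 * Real.sqrt y := by
          rw [show (4:ℝ)*y = 2^2*y by norm_num, Real.sqrt_mul (by positivity), Real.sqrt_sq]
          norm_num
        linarith
      have hden : (0:ℝ) < Real.exp 1 * Real.sqrt (ℓ:ℝ) := by positivity
      calc Real.exp (y-2) / (Real.exp 1 * (2*Real.sqrt y))
          ≤ Real.exp (y-2) / (Real.exp 1 * Real.sqrt (ℓ:ℝ)) := by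
            apply div_le_div_of_nonneg_left (Real.exp_nonneg _) hden
            exact mul_le_mul_of_nonneg_left hsl (Real.exp_pos 1).le
          _ ≤ (y * Real.exp 1 / ℓ)^ℓ / (Real.exp 1 * Real.sqrt (ℓ:ℝ)) := by
            apply div_le_div_of_nonneg_right ?_ hden.le
            exact le_trans (Real.exp_le_exp.mpr hexp) hpow
          _ ≤ y^ℓ/ℓ ! := hred
    -- squaring
    have hfp : (0:ℝ) < ℓ ! := by exact_mod_cast Nat.factorial_pos ℓ
    have hsq : C ≤ (y^ℓ/ℓ !) * (y^ℓ/ℓ !) := by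
      have hnn : (0:ℝ) ≤ Real.exp (y - 2) / (Real.exp 1 * (2 * Real.sqrt y)) := by positivity
      have h6 := mul_self_le_mul_self hnn hstep
      refine le_trans (le_of_eq ?_) h6
      rw [hCdef]
      have hsy : Real.sqrt y * Real.sqrt y = y := Real.mul_self_sqrt hy0.le
      have he2 : Real.exp (y-2) * Real.exp (y-2) = Real.exp (2*y - 4) := by
        rw [← Real.exp_add]; ring_nf
      have he12 : Real.exp 1 * Real.exp 1 = Real.exp 2 := by
        rw [← Real.exp_add]; norm_num
      have hden9 : (Real.exp 1 * (2*Real.sqrt y)) * (Real.exp 1 * (2*Real.sqrt y))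
          = 4 * Real.exp 2 * y := by
        have : (Real.exp 1 * (2*Real.sqrt y)) * (Real.exp 1 * (2*Real.sqrt y))
            = (Real.exp 1 * Real.exp 1) * 4 * (Real.sqrt y * Real.sqrt y) := by ring
        rw [this, he12, hsy]; ring
      rw [_root_.div_mul_div_comm, he2, hden9]
    -- to choose
    have hchoose : ((m:ℝ))^ℓ / ℓ ! / ℓ ! ≤ (n.choose ℓ : ℝ)/ℓ ! := by
      have h7 : (((n + 1 - ℓ : ℕ):ℝ))^ℓ / ℓ ! ≤ (n.choose ℓ : ℝ) := Nat.pow_le_choose ℓ n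
      have h8 : m ≤ n + 1 - ℓ := by omega
      have h9 : ((m:ℝ))^ℓ ≤ (((n + 1 - ℓ : ℕ):ℝ))^ℓ := by
        apply pow_le_pow_left₀ hm0
        exact_mod_cast h8
      have h10 : ((m:ℝ))^ℓ / ℓ ! ≤ (n.choose ℓ : ℝ) := le_trans (by gcongr) h7
      exact div_le_div_of_nonneg_right h10 hfp.le
    have hmpow : ((m:ℝ))^ℓ / ℓ ! / ℓ ! = (y^ℓ/ℓ !) * (y^ℓ/ℓ !) := by
      rw [← hyy, mul_pow]; ring
    calc C ≤ (y^ℓ/ℓ !) * (y^ℓ/ℓ !) := hsq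
      _ = ((m:ℝ))^ℓ / ℓ ! / ℓ ! := hmpow.symm
      _ ≤ (n.choose ℓ : ℝ)/ℓ ! := hchoose
  -- summation
  have hsum1 : (k:ℝ) * C ≤ ∑ ℓ ∈ Finset.Ico a (a+k), (n.choose ℓ : ℝ)/ℓ ! := by
    have h := Finset.card_nsmul_le_sum (Finset.Ico a (a+k)) _ C hterm
    rwa [Nat.card_Ico, Nat.add_sub_cancel_left, nsmul_eq_mul] at h
  have hsum2 : ∑ ℓ ∈ Finset.Ico a (a+k), (n.choose ℓ : ℝ)/ℓ ! ≤
      ∑ ℓ ∈ range (n+1), (n.choose ℓ : ℝ)/ℓ ! := by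
    apply Finset.sum_le_sum_of_subset_of_nonneg hsub
    intro i _ _
    positivity
  -- final arithmetic
  set q := Real.sqrt X with hqdef
  have hqq : q * q = X := Real.mul_self_sqrt hX0.le
  have hq31 : (31:ℝ) ≤ q := by
    rw [hqdef, Real.le_sqrt (by norm_num) hX0.le]
    norm_num
    linarith only [hsX, hsR]
  have hq0 : (0:ℝ) < q := by linarith
  have hkq : q / 2 ≤ (k:ℝ) := by
    have hks' : Real.sqrt (s:ℝ) < (k:ℝ) + 1 := by
      rw [Real.sqrt_lt' (by positivity), pow_two]
      exact_mod_cast hskk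
    have hXs' : Real.sqrt (X - 1) ≤ Real.sqrt (s:ℝ) := Real.sqrt_le_sqrt (by linarith)
    have hq2 : q/2 + 1 ≤ Real.sqrt (X - 1) := by
      rw [Real.le_sqrt (by linarith only [hq31]) (by linarith only [hsX, hsR])]
      nlinarith only [hqq, hq31]
    linarith only [hks', hXs', hq2]
  have hfinal : Real.exp (2 * X) * (Real.exp (-12) / 8) / q ≤ (k:ℝ) * C := by
    have hCpos : 0 < C := by rw [hCdef]; positivity
    have hC2 : Real.exp (2*X - 10) / (4 * Real.exp 2 * X) ≤ C := by
      rw [hCdef]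
      apply div_le_div₀ (by positivity)
        (Real.exp_le_exp.mpr (by linarith only [hXy3])) (by positivity)
      have h4e : (0:ℝ) ≤ 4 * Real.exp 2 := by positivity
      exact mul_le_mul_of_nonneg_left hyX h4e
    have heq : Real.exp (2 * X) * (Real.exp (-12) / 8) / q =
        (q/2) * (Real.exp (2*X - 10) / (4 * Real.exp 2 * X)) := by
      have hexp10 : Real.exp (2*X - 10) = Real.exp (2*X) * Real.exp (-12) * Real.exp 2 := by
        rw [← Real.exp_add, ← Real.exp_add]; ring_nf
      rw [hexp10, ← hqq]
      have he2 : Real.exp 2 ≠ 0 := (Real.exp_pos 2).ne'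
      field_simp
      ring
    rw [heq]
    apply mul_le_mul hkq hC2 (by positivity) (by positivity)
  calc Real.exp (2 * Real.sqrt n) * (Real.exp (-12) / 8) / Real.sqrt (Real.sqrt n)
      = Real.exp (2 * X) * (Real.exp (-12) / 8) / q := by rw [hXdef, hqdef]
    _ ≤ (k:ℝ) * C := hfinal
    _ ≤ ∑ ℓ ∈ Finset.Ico a (a+k), (n.choose ℓ : ℝ)/ℓ ! := hsum1
    _ ≤ ∑ ℓ ∈ range (n+1), (n.choose ℓ : ℝ)/ℓ ! := hsum2

lemma aux_rpow (n : ℕ) : (n:ℝ) ^ ((1:ℝ)/4) = Real.sqrt (Real.sqrt n) := by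
  rw [Real.sqrt_eq_rpow, Real.sqrt_eq_rpow, ← Real.rpow_mul (Nat.cast_nonneg n)]
  norm_num

/-- for E_n = Σ_{ℓ=0}^{n} C(n,ℓ)/ℓ! there are constants 0 < c₁ < c₂ with
c₁·e^{2√n}/n^{1/4} ≤ E_n ≤ c₂·e^{2√n}/n^{1/4} for all sufficiently large n. -/
theorem stmt14 :
    ∃ c₁ c₂ : ℝ, 0 < c₁ ∧ c₁ < c₂ ∧ ∃ N : ℕ, ∀ n : ℕ, N ≤ n →
      c₁ * Real.exp (2 * Real.sqrt n) / (n : ℝ) ^ ((1 : ℝ) / 4)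
          ≤ ∑ ℓ ∈ Finset.range (n + 1), (n.choose ℓ : ℝ) / ℓ.factorial
      ∧ ∑ ℓ ∈ Finset.range (n + 1), (n.choose ℓ : ℝ) / ℓ.factorial
          ≤ c₂ * Real.exp (2 * Real.sqrt n) / (n : ℝ) ^ ((1 : ℝ) / 4) := by
  refine ⟨Real.exp (-12) / 8, 1, by positivity, ?_, 1000000, fun n hn => ?_⟩
  · have h : Real.exp (-12) < 1 := by
      calc Real.exp (-12) < Real.exp 0 := Real.exp_lt_exp.mpr (by norm_num)
        _ = 1 := Real.exp_zero
    linarith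
  have hn2 : 20736 ≤ n := by omega
  have hlow := aux_lower n hn
  have hup := aux_upper n hn2
  rw [aux_rpow]
  constructor
  · calc Real.exp (-12) / 8 * Real.exp (2 * Real.sqrt n) / Real.sqrt (Real.sqrt n)
        = Real.exp (2 * Real.sqrt n) * (Real.exp (-12) / 8) / Real.sqrt (Real.sqrt n) := by
          ring
      _ ≤ _ := hlow
  · calc ∑ ℓ ∈ Finset.range (n + 1), (n.choose ℓ : ℝ) / ℓ.factorial
        ≤ Real.exp (2 * Real.sqrt n) / Real.sqrt (Real.sqrt n) := hup
      _ = 1 * Real.exp (2 * Real.sqrt n) / Real.sqrt (Real.sqrt n) := by ring
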